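/- arXiv:1309.2150 — 6 statements merged into one kernel-verified Lean document; each statement's English description precedes it below -/
import Mathlib

section
/- Let P(Z) = Z^n + ã2 Z^{n-2} + ⋯ + ãn be a monic real polynomial of degree n in Tschirnhausen form all of whose roots are real. Then |ãi|^{1/i} ≤ √2 · |ã2|^{1/2} for all i = 2,…,n. -/
open Polynomial Finset
noncomputable def Esym (n : ℕ) (lam : Fin n → ℝ) (k : ℕ) : ℝ :=
  MvPolynomial.eval lam (MvPolynomial.esymm (Fin n) ℝ k)
noncomputable def Psum (n : ℕ) (lam : Fin n → ℝ) (k : ℕ) : ℝ :=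
  MvPolynomial.eval lam (MvPolynomial.psum (Fin n) ℝ k)

lemma psum_eq (n : ℕ) (lam : Fin n → ℝ) (k : ℕ) : Psum n lam k = ∑ j, lam j ^ k := by
  simp [Psum, MvPolynomial.psum]

lemma esym_one (n : ℕ) (lam : Fin n → ℝ) : Esym n lam 1 = ∑ j, lam j := by
  simp [Esym, MvPolynomial.esymm_one]

lemma newton (n : ℕ) (lam : Fin n → ℝ) (k : ℕ) :
    (k : ℝ) * Esym n lam k = (-1)^(k+1) *
      ∑ a ∈ (Finset.HasAntidiagonal.antidiagonal k).filter (fun a => a.1 < k),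
        (-1)^a.1 * Esym n lam a.1 * Psum n lam a.2 := by
  have h := congrArg (MvPolynomial.eval lam) (MvPolynomial.mul_esymm_eq_sum (Fin n) ℝ k)
  simpa [Esym, Psum, map_sum, map_mul, map_pow] using h

lemma coeff_eq (n : ℕ) (lam : Fin n → ℝ) (i : ℕ) (hi : i ≤ n) :
    (∏ j, (X - C (lam j))).coeff (n - i) = (-1)^i * Esym n lam i := by
  have h1 : (∏ j : Fin n, (X - C (lam j)))
      = ((Finset.univ.val.map lam).map (fun t => X - C t)).prod := by
    rw [Multiset.map_map]; rfl
  have hcard : Multiset.card (Finset.univ.val.map lam) = n := by simp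
  rw [h1, Multiset.prod_X_sub_C_coeff _ (by omega : n - i ≤ Multiset.card (Finset.univ.val.map lam))]
  rw [hcard, Nat.sub_sub_self hi]
  congr 1
  rw [Finset.esymm_map_val]
  simp [Esym, MvPolynomial.esymm, MvPolynomial.eval_prod]

lemma psum_bound (n : ℕ) (lam : Fin n → ℝ) (h1 : ∑ j, lam j = 0)
    (s : ℝ) (hs : s = Real.sqrt (∑ j, (lam j)^2)) (k : ℕ) (hk : 1 ≤ k) :
    |Psum n lam k| ≤ s ^ k := by
  have hS : (0:ℝ) ≤ ∑ j, (lam j)^2 := Finset.sum_nonneg fun j _ => sq_nonneg _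
  have hs0 : 0 ≤ s := hs ▸ Real.sqrt_nonneg _
  have hs2 : s ^ 2 = ∑ j, (lam j)^2 := by rw [hs, Real.sq_sqrt hS]
  have hlam : ∀ j, |lam j| ≤ s := by
    intro j
    rw [← Real.sqrt_sq_eq_abs, hs]
    exact Real.sqrt_le_sqrt (Finset.single_le_sum (fun j _ => sq_nonneg (lam j)) (Finset.mem_univ j))
  rcases eq_or_lt_of_le hk with h | h
  · rw [psum_eq, ← h]; simp [h1]
    positivity
  · have hk2 : 2 ≤ k := h
    rw [psum_eq]
    calc |∑ j, lam j ^ k| ≤ ∑ j, |lam j ^ k| := Finset.abs_sum_le_sum_abs _ _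
      _ ≤ ∑ j, (lam j)^2 * s^(k-2) := by
          apply Finset.sum_le_sum
          intro j _
          rw [abs_pow]
          have : |lam j| ^ k = |lam j|^2 * |lam j|^(k-2) := by
            rw [← pow_add]; congr 1; omega
          rw [this, sq_abs]
          exact mul_le_mul_of_nonneg_left
            (pow_le_pow_left₀ (abs_nonneg _) (hlam j) _) (sq_nonneg _)
      _ = s ^ k := by
          rw [← Finset.sum_mul, ← hs2, ← pow_add]; congr 1; omega

lemma filter_card (k : ℕ) :
    ((Finset.HasAntidiagonal.antidiagonal k).filter (fun a => a.1 < k)).card = k := by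
  have h : ((Finset.HasAntidiagonal.antidiagonal k).filter (fun a => a.1 < k))
      = (Finset.HasAntidiagonal.antidiagonal k).erase (k, 0) := by
    ext a
    simp only [Finset.mem_filter, Finset.mem_erase, Finset.HasAntidiagonal.mem_antidiagonal, Prod.ext_iff,
      Ne, not_and]
    omega
  rw [h, Finset.card_erase_of_mem (by simp), Finset.Nat.card_antidiagonal]; omega

lemma esym_bound (n : ℕ) (lam : Fin n → ℝ) (h1 : ∑ j, lam j = 0)
    (s : ℝ) (hs : s = Real.sqrt (∑ j, (lam j)^2)) (k : ℕ) :
    |Esym n lam k| ≤ s ^ k := by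
  have hs0 : 0 ≤ s := hs ▸ Real.sqrt_nonneg _
  induction k using Nat.strong_induction_on with
  | _ k ih =>
    match k with
    | 0 => simp [Esym]
    | (m+1) =>
      set k := m + 1 with hkdef
      have hk1 : 1 ≤ k := by omega
      have key : (k:ℝ) * |Esym n lam k| ≤ (k:ℝ) * s ^ k := by
        calc (k:ℝ) * |Esym n lam k| = |(k:ℝ) * Esym n lam k| := by
              rw [abs_mul, Nat.abs_cast]
          _ = |∑ a ∈ (Finset.HasAntidiagonal.antidiagonal k).filter (fun a => a.1 < k),
                (-1:ℝ)^a.1 * Esym n lam a.1 * Psum n lam a.2| := by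
              rw [newton, abs_mul, abs_pow, abs_neg, abs_one, one_pow, one_mul]
          _ ≤ ∑ a ∈ (Finset.HasAntidiagonal.antidiagonal k).filter (fun a => a.1 < k),
                |(-1:ℝ)^a.1 * Esym n lam a.1 * Psum n lam a.2| :=
              Finset.abs_sum_le_sum_abs _ _
          _ ≤ ∑ a ∈ (Finset.HasAntidiagonal.antidiagonal k).filter (fun a => a.1 < k), s ^ k := by
              apply Finset.sum_le_sum
              intro a ha
              simp only [Finset.mem_filter, Finset.HasAntidiagonal.mem_antidiagonal] at ha
              rw [abs_mul, abs_mul, abs_pow, abs_neg, abs_one, one_pow, one_mul]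
              have e1 : |Esym n lam a.1| ≤ s ^ a.1 := ih a.1 ha.2
              have e2 : |Psum n lam a.2| ≤ s ^ a.2 :=
                psum_bound n lam h1 s hs a.2 (by omega)
              calc |Esym n lam a.1| * |Psum n lam a.2| ≤ s ^ a.1 * s ^ a.2 :=
                    mul_le_mul e1 e2 (abs_nonneg _) (by positivity)
                _ = s ^ k := by rw [← pow_add, ha.1]
          _ = (k:ℝ) * s ^ k := by
              rw [Finset.sum_const, filter_card, nsmul_eq_mul]
      have hkpos : (0:ℝ) < (k:ℝ) := by positivity
      exact le_of_mul_le_mul_left key hkpos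

lemma esym_two (n : ℕ) (lam : Fin n → ℝ) (h1 : ∑ j, lam j = 0) :
    Esym n lam 2 = -(∑ j, (lam j)^2) / 2 := by
  have h := newton n lam 2
  have hset : (Finset.HasAntidiagonal.antidiagonal 2).filter (fun a : ℕ × ℕ => a.1 < 2)
      = {(0,2),(1,1)} := by decide
  rw [hset] at h
  rw [Finset.sum_pair (by decide)] at h
  rw [esym_one n lam, h1] at h
  simp only [pow_zero, one_mul, pow_one, psum_eq] at h
  have hE0 : Esym n lam 0 = 1 := by simp [Esym]
  rw [hE0] at h
  simp only [sq] at h ⊢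
  norm_num at h; linarith

theorem tschirnhausen_coeff_bound (n : ℕ) (hn : 2 ≤ n) (lam : Fin n → ℝ)
    (P : Polynomial ℝ) (hP : P = ∏ j, (X - C (lam j)))
    (htsch : P.coeff (n - 1) = 0) :
    ∀ i : ℕ, 2 ≤ i → i ≤ n →
      |P.coeff (n - i)| ^ (1 / (i : ℝ)) ≤
        Real.sqrt 2 * |P.coeff (n - 2)| ^ ((1 : ℝ) / 2) := by
  intro i hi2 hin
  subst hP
  set S := ∑ j, (lam j)^2 with hSdef
  have hS0 : (0:ℝ) ≤ S := Finset.sum_nonneg fun j _ => sq_nonneg _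
  set s := Real.sqrt S with hsdef
  have hs0 : 0 ≤ s := Real.sqrt_nonneg _
  -- sum of roots is zero
  have h1 : ∑ j, lam j = 0 := by
    have hc := coeff_eq n lam 1 (by omega)
    rw [htsch, esym_one] at hc
    linarith [hc]
  -- coefficient at n - i
  have habs_i : |(∏ j, (X - C (lam j))).coeff (n - i)| = |Esym n lam i| := by
    rw [coeff_eq n lam i hin, abs_mul, abs_pow, abs_neg, abs_one, one_pow, one_mul]
  -- coefficient at n - 2
  have habs_2 : |(∏ j, (X - C (lam j))).coeff (n - 2)| = S / 2 := by
    rw [coeff_eq n lam 2 hn, esym_two n lam h1]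
    rw [abs_mul, abs_pow, abs_neg, abs_one, one_pow, one_mul, abs_div, abs_neg,
      abs_of_nonneg hS0, abs_two]
  -- RHS equals s
  have hRHS : Real.sqrt 2 * |(∏ j, (X - C (lam j))).coeff (n - 2)| ^ ((1:ℝ)/2) = s := by
    rw [habs_2, ← Real.sqrt_eq_rpow, ← Real.sqrt_mul (by norm_num : (0:ℝ) ≤ 2), hsdef]
    have h2 : Real.sqrt 2 ≠ 0 := by positivity
    field_simp
  rw [hRHS, habs_i]
  have hEi : |Esym n lam i| ≤ s ^ i := esym_bound n lam h1 s hsdef i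
  have h2 : |Esym n lam i| ^ (1/(i:ℝ)) ≤ (s ^ i) ^ (1/(i:ℝ)) :=
    Real.rpow_le_rpow (abs_nonneg _) hEi (by positivity)
  have h3 : (s ^ i) ^ (1/(i:ℝ)) = s := by
    rw [← Real.rpow_natCast s i, ← Real.rpow_mul hs0]
    rw [mul_one_div, div_self (by positivity : (i:ℝ) ≠ 0), Real.rpow_one]
  rw [h3] at h2
  exact h2
end

section
/- Let P_a = P_b · P_c be a factorization of a monic real polynomial of degree n = k + m into a monic polynomial P_b of degree k ≤ n and a monic polynomial P_c, all with real roots. Let P_ã and P_b̃ denote the Tschirnhausen forms of P_a and P_b respectively (obtained by substituting Z ↦ Z - a1/n, resp. Z ↦ Z - b1/k). Then |b̃2| ≤ 2n·|ã2|, where b̃2 and ã2 are the coefficients of Z^{k-2} and Z^{n-2} in P_b̃ and P_ã. -/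
open Polynomial

private lemma sum_shift_sq (k : ℕ) (mu : Fin k → ℝ) (x : ℝ) :
    ∑ j, (mu j + x) ^ 2 = (∑ j, (mu j) ^ 2) + 2 * x * (∑ j, mu j) + k * x ^ 2 := by
  have h : ∀ j : Fin k, (mu j + x) ^ 2 = (mu j) ^ 2 + 2 * x * (mu j) + x ^ 2 :=
    fun j => by ring
  simp only [h, Finset.sum_add_distrib, ← Finset.mul_sum, Finset.sum_const,
    Finset.card_univ, Fintype.card_fin, nsmul_eq_mul]

private lemma esymm_two_mul (s : Multiset ℝ) :
    2 * s.esymm 2 = s.sum ^ 2 - (s.map (fun x => x ^ 2)).sum := by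
  induction s using Multiset.induction_on with
  | empty => simp [Multiset.esymm, Multiset.powersetCard_zero_right 1]
  | cons a s ih =>
    have h2 : (a ::ₘ s).esymm 2 = s.esymm 2 + a * s.sum := by
      rw [Multiset.esymm, show (2 : ℕ) = 1 + 1 from rfl, Multiset.powersetCard_cons,
        Multiset.map_add, Multiset.sum_add, Multiset.map_map, Multiset.powersetCard_one,
        Multiset.map_map]
      congr 1
      have heq : ((Multiset.prod ∘ Multiset.cons a) ∘ singleton) = fun x : ℝ => a * x := by
          funext x; simp
      rw [heq]
      simpa using Multiset.sum_map_mul_left (s := s) (a := a) (f := id)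
    rw [Multiset.sum_cons, Multiset.map_cons, Multiset.sum_cons, h2]
    nlinarith [ih]

private lemma prod_coeff_sub_two {ι : Type*} [Fintype ι] (t : ι → ℝ)
    (h : 2 ≤ Fintype.card ι) :
    (∏ i, (X - C (t i))).coeff (Fintype.card ι - 2)
      = ((∑ i, t i) ^ 2 - ∑ i, (t i) ^ 2) / 2 := by
  have hs : (∏ i, (X - C (t i)))
      = ((Finset.univ.val.map t).map (fun r => X - C r)).prod := by
    rw [Multiset.map_map]; rfl
  have hcard : Multiset.card (Finset.univ.val.map t) = Fintype.card ι := by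
    rw [Multiset.card_map]; exact Finset.card_univ
  have hle : Fintype.card ι - 2 ≤ Multiset.card (Finset.univ.val.map t) := by omega
  rw [hs, Multiset.prod_X_sub_C_coeff _ hle, hcard,
    show Fintype.card ι - (Fintype.card ι - 2) = 2 from by omega]
  have key := esymm_two_mul (Finset.univ.val.map t)
  have h1 : (Finset.univ.val.map t).sum = ∑ i, t i := rfl
  have h2 : ((Finset.univ.val.map t).map (fun x => x ^ 2)).sum = ∑ i, (t i) ^ 2 := by
    rw [Multiset.map_map]; rfl
  rw [h1, h2] at key
  have : ((-1 : ℝ)) ^ 2 = 1 := by norm_num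
  rw [this, one_mul]
  linarith

private lemma comp_shift {ι : Type*} [Fintype ι] (t : ι → ℝ) (x : ℝ) :
    (∏ i, (X - C (t i))).comp (X - C x) = ∏ i, (X - C (t i + x)) := by
  rw [Polynomial.prod_comp]
  refine Finset.prod_congr rfl fun i _ => ?_
  rw [sub_comp, X_comp, C_comp, sub_sub, ← C_add, add_comm x (t i)]

private lemma centered_coeff {ι : Type*} [Fintype ι] (t : ι → ℝ)
    (h : 2 ≤ Fintype.card ι) (hsum : ∑ i, t i = 0) :
    (∏ i, (X - C (t i))).coeff (Fintype.card ι - 2) = -(∑ i, (t i) ^ 2) / 2 := by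
  rw [prod_coeff_sub_two t h, hsum]; ring

theorem tschirnhausen_factor_b2 (n k m : ℕ) (hk : 2 ≤ k) (hn : n = k + m)
    (mu : Fin k → ℝ) (nu : Fin m → ℝ)
    (Pb Pc Pa : Polynomial ℝ)
    (hPb : Pb = ∏ j, (X - C (mu j))) (hPc : Pc = ∏ j, (X - C (nu j)))
    (hPa : Pa = Pb * Pc)
    (a2t : ℝ) (ha2t : a2t = (Pa.comp (X - C (Pa.coeff (n - 1) / n))).coeff (n - 2))
    (b2t : ℝ) (hb2t : b2t = (Pb.comp (X - C (Pb.coeff (k - 1) / k))).coeff (k - 2)) :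
    |b2t| ≤ 2 * n * |a2t| := by
  have hkR : (k : ℝ) ≠ 0 := Nat.cast_ne_zero.mpr (by omega)
  have hn2 : 2 ≤ n := by omega
  have hnR : (n : ℝ) ≠ 0 := Nat.cast_ne_zero.mpr (by omega)
  set g : Fin k ⊕ Fin m → ℝ := Sum.elim mu nu with hg
  have hcard : Fintype.card (Fin k ⊕ Fin m) = n := by simp [hn]
  have hPa' : Pa = ∏ i, (X - C (g i)) := by
    rw [hPa, hPb, hPc, Fintype.prod_sum_type]; rfl
  -- first coefficients
  have ha1 : Pa.coeff (n - 1) = -∑ i, g i := by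
    rw [hPa']
    have h0 : 0 < (Finset.univ : Finset (Fin k ⊕ Fin m)).card := by
      rw [Finset.card_univ, hcard]; omega
    have := prod_X_sub_C_coeff_card_pred Finset.univ g h0
    rwa [Finset.card_univ, hcard] at this
  have hb1 : Pb.coeff (k - 1) = -∑ j, mu j := by
    rw [hPb]
    have h0 : 0 < (Finset.univ : Finset (Fin k)).card := by
      rw [Finset.card_univ, Fintype.card_fin]; omega
    have := prod_X_sub_C_coeff_card_pred Finset.univ mu h0
    rwa [Finset.card_univ, Fintype.card_fin] at this
  set c : ℝ := Pa.coeff (n - 1) / n with hc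
  set b : ℝ := Pb.coeff (k - 1) / k with hb
  -- centered sums
  have hgsum : ∑ i, (g i + c) = 0 := by
    rw [Finset.sum_add_distrib, Finset.sum_const, Finset.card_univ, hcard, nsmul_eq_mul,
      hc, ha1]
    field_simp
    ring
  have hmusum : ∑ j, (mu j + b) = 0 := by
    rw [Finset.sum_add_distrib, Finset.sum_const, Finset.card_univ, Fintype.card_fin,
      nsmul_eq_mul, hb, hb1]
    field_simp
    ring
  -- Tschirnhausen coefficients
  have ha2 : a2t = -(∑ i, (g i + c) ^ 2) / 2 := by
    have := centered_coeff (fun i => g i + c) (by omega) hgsum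
    rw [hcard] at this
    rw [ha2t, hPa', comp_shift, this]
  have hb2 : b2t = -(∑ j, (mu j + b) ^ 2) / 2 := by
    have := centered_coeff (fun j => mu j + b) (by simp [Fintype.card_fin]; omega) hmusum
    rw [Fintype.card_fin] at this
    rw [hb2t, hPb, comp_shift, this]
  -- comparisons
  have hsplit : ∑ i, (g i + c) ^ 2 = (∑ j, (mu j + c) ^ 2) + ∑ j, (nu j + c) ^ 2 := by
    rw [Fintype.sum_sum_type]; rfl
  have hbmu : ∑ j, mu j = -((k : ℝ) * b) := by
    rw [hb, hb1]; field_simp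
  have e1 := sum_shift_sq k mu b
  have e2 := sum_shift_sq k mu c
  have h1 : ∑ j, (mu j + b) ^ 2 ≤ ∑ j, (mu j + c) ^ 2 := by
    rw [hbmu] at e1 e2
    nlinarith [mul_nonneg (Nat.cast_nonneg (α := ℝ) k) (sq_nonneg (c - b))]
  have h2 : (0 : ℝ) ≤ ∑ j, (nu j + c) ^ 2 :=
    Finset.sum_nonneg fun _ _ => sq_nonneg _
  have hmnn : (0 : ℝ) ≤ ∑ j, (mu j + b) ^ 2 :=
    Finset.sum_nonneg fun _ _ => sq_nonneg _
  have hgnn : (0 : ℝ) ≤ ∑ i, (g i + c) ^ 2 :=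
    Finset.sum_nonneg fun _ _ => sq_nonneg _
  have habs_a : |a2t| = (∑ i, (g i + c) ^ 2) / 2 := by
    rw [ha2, abs_of_nonpos (by linarith)]; ring
  have habs_b : |b2t| = (∑ j, (mu j + b) ^ 2) / 2 := by
    rw [hb2, abs_of_nonpos (by linarith)]; ring
  have hba : |b2t| ≤ |a2t| := by
    rw [habs_a, habs_b]
    linarith [hsplit]
  have hone : (1 : ℝ) ≤ 2 * n := by
    have : (2 : ℝ) ≤ (n : ℝ) := by exact_mod_cast hn2
    linarith
  calc |b2t| ≤ |a2t| := hba
    _ = 1 * |a2t| := by ring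
    _ ≤ 2 * n * |a2t| := by
        exact mul_le_mul_of_nonneg_right hone (abs_nonneg _)
end

section
/- Let I ⊆ ℝ be an open interval, f : I → ℝ a C^{1,1} function (f is C^1 with f' Lipschitz) that is nonnegative on I. Let t0 ∈ I and M > 0 be such that the interval I_{t0} := {t : |t - t0| < M^{-1} |f(t0)|^{1/2}} is contained in I and M ≥ (Lip_{I_{t0}}(f'))^{1/2}. Then |f'(t0)| ≤ 2 M |f(t0)|^{1/2}. -/
open Set

theorem glaeser_type (a b : ℝ) (f f' : ℝ → ℝ)
    (hderiv : ∀ t ∈ Ioo a b, HasDerivAt f (f' t) t)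
    (hnonneg : ∀ t ∈ Ioo a b, 0 ≤ f t)
    (t0 : ℝ) (ht0 : t0 ∈ Ioo a b) (M : ℝ) (hM : 0 < M)
    (I0 : Set ℝ)
    (hI0 : I0 = {t : ℝ | |t - t0| < M⁻¹ * Real.sqrt (f t0)})
    (hsub : I0 ⊆ Ioo a b)
    (K : NNReal) (hlip : LipschitzOnWith K f' I0) (hMK : Real.sqrt K ≤ M) :
    |f' t0| ≤ 2 * M * Real.sqrt (f t0) := by
  have hf0 : 0 ≤ f t0 := hnonneg t0 ht0
  set r : ℝ := M⁻¹ * Real.sqrt (f t0) with hrdef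
  rcases eq_or_lt_of_le hf0 with h0 | h0
  · -- f t0 = 0 : t0 is a local min, so f' t0 = 0
    have hmin : IsLocalMin f t0 := by
      filter_upwards [isOpen_Ioo.mem_nhds ht0] with t ht
      rw [← h0]; exact hnonneg t ht
    have hz : f' t0 = 0 := hmin.hasDerivAt_eq_zero (hderiv t0 ht0)
    simp [hz, ← h0]
  · -- f t0 > 0
    have hS : 0 < Real.sqrt (f t0) := Real.sqrt_pos.mpr h0
    have hrpos : 0 < r := by positivity
    have hball : I0 = Metric.ball t0 r := by
      ext t; simp [hI0, Metric.mem_ball, Real.dist_eq]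
    have hconv : Convex ℝ I0 := by rw [hball]; exact convex_ball t0 r
    have ht0I : t0 ∈ I0 := by rw [hball]; simpa [Metric.mem_ball] using hrpos
    -- key inequality for all s ∈ (0, r)
    have key : ∀ s ∈ Ioo (0:ℝ) r, |f' t0| * s ≤ f t0 + K * r * s := by
      intro s hs
      obtain ⟨hs0, hsr⟩ := hs
      -- Taylor-type bound for any t1 ∈ I0
      have taylor : ∀ t1 ∈ I0, |f t1 - f t0 - f' t0 * (t1 - t0)| ≤ K * r * |t1 - t0| := by
        intro t1 ht1
        have hd : ∀ x ∈ I0, HasDerivWithinAt (fun t => f t - f' t0 * t)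
            (f' x - f' t0) I0 x := by
          intro x hx
          have hlin : HasDerivAt (fun t => f' t0 * t) (f' t0) x := by
            simpa using (hasDerivAt_id x).const_mul (f' t0)
          exact ((hderiv x (hsub hx)).sub hlin).hasDerivWithinAt
        have hbd : ∀ x ∈ I0, ‖f' x - f' t0‖ ≤ K * r := by
          intro x hx
          have := hlip.dist_le_mul x hx t0 ht0I
          rw [Real.dist_eq, Real.dist_eq] at this
          have hxr : |x - t0| ≤ r := by
            have := hball ▸ hx
            rw [Metric.mem_ball, Real.dist_eq] at this
            exact this.le
          calc ‖f' x - f' t0‖ ≤ K * |x - t0| := this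
            _ ≤ K * r := by
                exact mul_le_mul_of_nonneg_left hxr (by positivity)
        have := hconv.norm_image_sub_le_of_norm_hasDerivWithin_le hd hbd ht0I ht1
        calc |f t1 - f t0 - f' t0 * (t1 - t0)|
            = ‖(f t1 - f' t0 * t1) - (f t0 - f' t0 * t0)‖ := by
              rw [Real.norm_eq_abs]; ring_nf
          _ ≤ K * r * ‖t1 - t0‖ := this
          _ = K * r * |t1 - t0| := by rw [Real.norm_eq_abs]
      -- apply at t0 + s and t0 - s
      have hmem : ∀ ε : ℝ, |ε| = s → t0 + ε ∈ I0 := by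
        intro ε hε
        rw [hball, Metric.mem_ball, Real.dist_eq]
        simpa [hε] using hsr
      have habs : |f' t0| * s = |f' t0 * s| := by rw [abs_mul, abs_of_pos hs0]
      rw [habs, abs_le]
      constructor
      all_goals {
        first
        | (have h1 := taylor (t0 + s) (hmem s (abs_of_pos hs0))
           have h2 := hnonneg (t0 + s) (hsub (hmem s (abs_of_pos hs0)))
           rw [abs_le] at h1
           simp only [add_sub_cancel_left, abs_of_pos hs0] at h1
           nlinarith [h1.1, h1.2])
        | (have h1 := taylor (t0 - s) (hmem (-s) (by rw [abs_neg, abs_of_pos hs0]))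
           have h2 := hnonneg (t0 - s) (hsub (hmem (-s) (by rw [abs_neg, abs_of_pos hs0])))
           rw [abs_le] at h1
           have : t0 - s - t0 = -s := by ring
           rw [this, abs_neg, abs_of_pos hs0] at h1
           nlinarith [h1.1, h1.2]) }
    -- pass to the limit s → r
    have hlim : |f' t0| * r ≤ f t0 + K * r * r := by
      by_contra hc
      push_neg at hc
      -- |f' t0| * r > f t0 + K r², so |f' t0| > K r, and for s close to r contradiction
      have hA : 0 < |f' t0| - K * r := by
        nlinarith [abs_nonneg (f' t0), hrpos, h0, (NNReal.coe_nonneg K)]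
      set c : ℝ := f t0 / (|f' t0| - K * r) with hcdef
      have hcr : c < r := by
        rw [hcdef, div_lt_iff₀ hA]; nlinarith
      have hc0 : 0 ≤ c := div_nonneg hf0 hA.le
      set s : ℝ := (max c 0 + r) / 2 with hsdef
      have hs1 : c < s := by
        have : c ≤ max c 0 := le_max_left _ _
        have : max c 0 < s := by
          rw [hsdef]
          have : max c 0 < r := max_lt hcr hrpos
          linarith
        linarith [le_max_left c 0]
      have hs0 : 0 < s := by
        have : (0:ℝ) ≤ max c 0 := le_max_right _ _
        rw [hsdef]; linarith
      have hsr : s < r := by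
        rw [hsdef]
        have : max c 0 < r := max_lt hcr hrpos
        linarith
      have := key s ⟨hs0, hsr⟩
      have hsle : s ≤ c := by
        rw [hcdef, le_div_iff₀ hA]; nlinarith
      linarith
    -- conclude
    have hK2 : (K:ℝ) ≤ M ^ 2 := by
      nlinarith [Real.sq_sqrt (NNReal.coe_nonneg K : (0:ℝ) ≤ (K:ℝ)), Real.sqrt_nonneg (K:ℝ)]
    have hSS : Real.sqrt (f t0) * Real.sqrt (f t0) = f t0 := Real.mul_self_sqrt hf0
    have hrM : r * M = Real.sqrt (f t0) := by
      rw [hrdef]; field_simp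
    nlinarith [hlim, mul_pos hrpos hM, sq_nonneg (r * M), hrpos, hS,
      mul_le_mul_of_nonneg_right hK2 (mul_pos hrpos hrpos).le]
end

section
/- Let I ⊆ ℝ be an open interval, f : I → ℝ a C^1 function with Lipschitz derivative, and suppose f ≥ 0 on I. Then for every t0 ∈ I such that the interval of radius L^{-1/2} f(t0)^{1/2} around t0 is contained in I, where L = Lip_I(f') > 0, one has f'(t0)^2 ≤ 4 L f(t0). -/
open Set

/-- Quadratic Taylor-type bound for a function with Lipschitz derivative. -/
lemma taylor_bound_aux (a b : ℝ) (f f' : ℝ → ℝ)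
    (hderiv : ∀ t ∈ Ioo a b, HasDerivAt f (f' t) t)
    (L : NNReal) (hlip : LipschitzOnWith L f' (Ioo a b))
    {t0 t : ℝ} (ht0 : t0 ∈ Ioo a b) (ht : t ∈ Ioo a b) :
    |f t - f t0 - f' t0 * (t - t0)| ≤ L * |t - t0| * |t - t0| := by
  set s : Set ℝ := uIcc t0 t with hs
  have hsub : s ⊆ Ioo a b := by
    rw [hs]
    exact (Set.ordConnected_Ioo).uIcc_subset ht0 ht
  have hconv : Convex ℝ s := convex_uIcc _ _
  have key := hconv.norm_image_sub_le_of_norm_hasFDerivWithin_le'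
    (f := f) (f' := fun x => ContinuousLinearMap.smulRight (1 : ℝ →L[ℝ] ℝ) (f' x))
    (φ := ContinuousLinearMap.smulRight (1 : ℝ →L[ℝ] ℝ) (f' t0))
    (C := (L : ℝ) * |t - t0|)
    (fun x hx => (hderiv x (hsub hx)).hasFDerivAt.hasFDerivWithinAt)
    (fun x hx => by
      have : ContinuousLinearMap.smulRight (1 : ℝ →L[ℝ] ℝ) (f' x) -
          ContinuousLinearMap.smulRight (1 : ℝ →L[ℝ] ℝ) (f' t0) =
          ContinuousLinearMap.smulRight (1 : ℝ →L[ℝ] ℝ) (f' x - f' t0) := by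
        ext; simp [smul_sub, sub_smul, mul_sub]
      rw [this]
      have hnorm : ‖ContinuousLinearMap.smulRight (1 : ℝ →L[ℝ] ℝ) (f' x - f' t0)‖
          = ‖f' x - f' t0‖ := by
        simp [ContinuousLinearMap.norm_smulRight_apply]
      rw [hnorm]
      have := hlip.norm_sub_le (hsub hx) ht0
      calc ‖f' x - f' t0‖ ≤ L * ‖x - t0‖ := this
        _ ≤ L * |t - t0| := by
            gcongr
            have h1 : dist x t0 ≤ dist t0 t :=
              Real.dist_le_of_mem_uIcc hx left_mem_uIcc
            calc ‖x - t0‖ = dist x t0 := by rw [Real.dist_eq, Real.norm_eq_abs]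
              _ ≤ dist t0 t := h1
              _ = |t - t0| := by rw [Real.dist_eq, abs_sub_comm]
    ) left_mem_uIcc right_mem_uIcc
  simpa [Real.norm_eq_abs, mul_comm] using key

theorem glaeser_inequality (a b : ℝ) (f f' : ℝ → ℝ)
    (hderiv : ∀ t ∈ Ioo a b, HasDerivAt f (f' t) t)
    (hnonneg : ∀ t ∈ Ioo a b, 0 ≤ f t)
    (L : NNReal) (hL : 0 < L) (hlip : LipschitzOnWith L f' (Ioo a b)) :
    ∀ t0 ∈ Ioo a b,
      {t : ℝ | |t - t0| < (L : ℝ) ^ (-(1 : ℝ) / 2) * Real.sqrt (f t0)} ⊆ Ioo a b →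
      (f' t0) ^ 2 ≤ 4 * L * f t0 := by
  intro t0 ht0 hsub
  have hLpos : (0 : ℝ) < L := hL
  have hf0 : 0 ≤ f t0 := hnonneg t0 ht0
  rcases eq_or_lt_of_le hf0 with hf0' | hf0'
  · -- f t0 = 0 : interior minimum, derivative is zero
    have hmin : IsLocalMin f t0 := by
      have hev : ∀ᶠ t in nhds t0, f t0 ≤ f t := by
        filter_upwards [isOpen_Ioo.mem_nhds ht0] with t ht
        rw [← hf0']; exact hnonneg t ht
      exact hev
    have hd0 : f' t0 = 0 := hmin.hasDerivAt_eq_zero (hderiv t0 ht0)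
    rw [hd0, ← hf0']
    norm_num
  · -- f t0 > 0
    set r : ℝ := (L : ℝ) ^ (-(1 : ℝ) / 2) * Real.sqrt (f t0) with hr
    have hrpos : 0 < r := by
      apply mul_pos (Real.rpow_pos_of_pos hLpos _) (Real.sqrt_pos.mpr hf0')
    have hr2 : (L : ℝ) * r ^ 2 = f t0 := by
      rw [hr, mul_pow, ← Real.rpow_natCast ((L:ℝ) ^ (-(1:ℝ)/2)) 2,
        ← Real.rpow_mul hLpos.le, Real.sq_sqrt hf0]
      norm_num
      rw [Real.rpow_neg_one]
      field_simp
    -- key quadratic nonnegativity on the open ball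
    have key : ∀ h : ℝ, |h| < r → 0 ≤ f t0 + f' t0 * h + L * h ^ 2 := by
      intro h hh
      have ht : t0 + h ∈ Ioo a b := by
        apply hsub
        simp only [mem_setOf_eq, add_sub_cancel_left]
        exact hh
      have htb := taylor_bound_aux a b f f' hderiv L hlip ht0 ht
      have h1 : f (t0 + h) - f t0 - f' t0 * h ≤ L * h ^ 2 := by
        have := (abs_le.mp htb).2
        simp only [add_sub_cancel_left] at this
        nlinarith [abs_nonneg h, sq_abs h, le_abs_self h]
      have h2 : 0 ≤ f (t0 + h) := hnonneg _ ht
      nlinarith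
    -- extend to the closed ball by continuity
    have keyc : ∀ h : ℝ, |h| ≤ r → 0 ≤ f t0 + f' t0 * h + L * h ^ 2 := by
      intro h hh
      have hcont : Continuous fun h : ℝ => f t0 + f' t0 * h + (L : ℝ) * h ^ 2 := by
        continuity
      have hclosed : IsClosed {h : ℝ | 0 ≤ f t0 + f' t0 * h + L * h ^ 2} :=
        isClosed_le continuous_const hcont
      have hball : Metric.ball (0 : ℝ) r ⊆ {h : ℝ | 0 ≤ f t0 + f' t0 * h + L * h ^ 2} := by
        intro x hx
        exact key x (by simpa [Real.dist_eq] using hx)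
      have : Metric.closedBall (0 : ℝ) r ⊆ {h : ℝ | 0 ≤ f t0 + f' t0 * h + L * h ^ 2} := by
        rw [← closure_ball (0:ℝ) hrpos.ne']
        exact hclosed.closure_subset_iff.mpr hball
      exact this (by simpa [Real.dist_eq] using hh)
    have hQr := keyc r (by rw [abs_of_pos hrpos])
    have hQmr := keyc (-r) (by rw [abs_neg, abs_of_pos hrpos])
    -- 2 f ± f' r ≥ 0, so (f' r)^2 ≤ 4 f^2, and r^2 = f/L gives the result
    nlinarith [mul_nonneg hQr hQmr, hr2, mul_pos hrpos hrpos, hf0', hLpos,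
      sq_nonneg (f' t0 * r)]
end

section
/- There exists a constant C(m) depending only on m such that: for every open bounded interval I ⊆ ℝ and every f ∈ C^{m-1,1}(closure of I) (f is C^{m-1} and f^{(m-1)} is Lipschitz), and for all t ∈ I and all k = 1,…,m-1, one has |f^{(k)}(t)| ≤ C(m) |I|^{-k} ( ‖f‖_{L^∞(I)} + Lip_I(f^{(m-1)}) |I|^m ), where |I| denotes the length of I. -/
open Set

open Polynomial in
lemma lk_coeff_bound (m : ℕ) (hm : 1 ≤ m) : ∃ C : ℝ, 0 < C ∧ ∀ q : ℝ[X], q.natDegree < m →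
    ∀ M : ℝ, (∀ x ∈ Icc (0:ℝ) 1, |q.eval x| ≤ M) → ∀ j, |q.coeff j| ≤ C * M := by
  classical
  set v : ℕ → ℝ := fun i => (i : ℝ) / m with hv
  have hinj : Set.InjOn v (Finset.range m) := by
    intro i _ j _ h
    have hm0 : (m : ℝ) ≠ 0 := by positivity
    simp only [hv] at h
    field_simp at h
    exact_mod_cast h
  set B : ℝ := ∑ i ∈ Finset.range m, ∑ j ∈ Finset.range m,
      |(Lagrange.basis (Finset.range m) v i).coeff j| with hB
  have hB0 : 0 ≤ B := Finset.sum_nonneg fun i _ => Finset.sum_nonneg fun j _ => abs_nonneg _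
  refine ⟨B + 1, by positivity, ?_⟩
  intro q hq M hM j
  have hM0 : 0 ≤ M := le_trans (abs_nonneg _) (hM 0 ⟨le_refl 0, zero_le_one⟩)
  by_cases hj : j < m
  · have hdeg : q.degree < (Finset.range m).card := by
      rw [Finset.card_range]
      exact lt_of_le_of_lt degree_le_natDegree (by exact_mod_cast hq)
    have hrep := Lagrange.eq_interpolate hinj hdeg
    have hco : q.coeff j = ∑ i ∈ Finset.range m,
        q.eval (v i) * (Lagrange.basis (Finset.range m) v i).coeff j := by
      conv_lhs => rw [hrep]
      rw [Lagrange.interpolate_apply, finset_sum_coeff]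
      simp [coeff_C_mul]
    rw [hco]
    calc |∑ i ∈ Finset.range m, q.eval (v i) * (Lagrange.basis (Finset.range m) v i).coeff j|
        ≤ ∑ i ∈ Finset.range m, |q.eval (v i) * (Lagrange.basis (Finset.range m) v i).coeff j| :=
          Finset.abs_sum_le_sum_abs _ _
      _ ≤ ∑ i ∈ Finset.range m, M * |(Lagrange.basis (Finset.range m) v i).coeff j| := by
          refine Finset.sum_le_sum fun i hi => ?_
          rw [abs_mul]
          refine mul_le_mul_of_nonneg_right ?_ (abs_nonneg _)
          refine hM _ ⟨by positivity, ?_⟩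
          rw [div_le_one (by positivity)]
          exact_mod_cast (Finset.mem_range.mp hi).le
      _ = M * ∑ i ∈ Finset.range m, |(Lagrange.basis (Finset.range m) v i).coeff j| := by
          rw [Finset.mul_sum]
      _ ≤ M * B := by
          refine mul_le_mul_of_nonneg_left ?_ hM0
          rw [hB]
          refine Finset.sum_le_sum fun i _ => ?_
          exact Finset.single_le_sum (f := fun j => |(Lagrange.basis (Finset.range m) v i).coeff j|)
            (fun j _ => abs_nonneg _) (Finset.mem_range.mpr hj)
      _ ≤ (B + 1) * M := by nlinarith
  · rw [coeff_eq_zero_of_natDegree_lt (lt_of_lt_of_le hq (le_of_not_gt hj))]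
    simp; positivity

open Polynomial in
lemma lk_deriv_eval_bound (m : ℕ) (hm : 1 ≤ m) : ∃ C : ℝ, 0 < C ∧ ∀ q : ℝ[X], q.natDegree < m →
    ∀ M : ℝ, (∀ x ∈ Icc (0:ℝ) 1, |q.eval x| ≤ M) → ∀ k : ℕ, ∀ τ ∈ Icc (0:ℝ) 1,
      |(derivative^[k] q).eval τ| ≤ C * M := by
  obtain ⟨C₁, hC₁, h1⟩ := lk_coeff_bound m hm
  refine ⟨m * m ^ m * C₁, by positivity, ?_⟩
  intro q hq M hM k τ hτ
  have hM0 : 0 ≤ M := le_trans (abs_nonneg _) (hM 0 ⟨le_refl 0, zero_le_one⟩)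
  have hdeg : (derivative^[k] q).natDegree < m :=
    lt_of_le_of_lt (le_trans (natDegree_iterate_derivative q k) (Nat.sub_le _ _)) hq
  rw [eval_eq_sum_range' hdeg]
  calc |∑ i ∈ Finset.range m, (derivative^[k] q).coeff i * τ ^ i|
      ≤ ∑ i ∈ Finset.range m, |(derivative^[k] q).coeff i * τ ^ i| :=
        Finset.abs_sum_le_sum_abs _ _
    _ ≤ ∑ i ∈ Finset.range m, (m:ℝ) ^ m * (C₁ * M) := by
        refine Finset.sum_le_sum fun i _ => ?_
        rw [abs_mul]
        have hτ1 : |τ ^ i| ≤ 1 := by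
          rw [abs_pow]
          exact pow_le_one₀ (abs_nonneg _) (abs_le.mpr ⟨by linarith [hτ.1], hτ.2⟩)
        have hcoeff : |(derivative^[k] q).coeff i| ≤ (m:ℝ) ^ m * (C₁ * M) := by
          rw [coeff_iterate_derivative]
          by_cases hz : q.coeff (i + k) = 0
          · rw [hz]; simp; positivity
          · have hik : i + k < m := lt_of_le_of_lt (le_natDegree_of_ne_zero hz) hq
            rw [nsmul_eq_mul, abs_mul, Nat.abs_cast]
            have hd : ((i + k).descFactorial k : ℝ) ≤ (m:ℝ) ^ m := by
              have h1' : (i + k).descFactorial k ≤ (i + k) ^ k := Nat.descFactorial_le_pow _ _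
              have h2' : (i + k) ^ k ≤ m ^ m :=
                le_trans (Nat.pow_le_pow_left hik.le k) (Nat.pow_le_pow_right (by omega) (by omega))
              exact_mod_cast h1'.trans h2'
            exact mul_le_mul hd (h1 q hq M hM _) (abs_nonneg _) (by positivity)
        calc |(derivative^[k] q).coeff i| * |τ ^ i|
            ≤ ((m:ℝ) ^ m * (C₁ * M)) * 1 :=
              mul_le_mul hcoeff hτ1 (abs_nonneg _) (by positivity)
          _ = (m:ℝ) ^ m * (C₁ * M) := by ring
    _ = m * m ^ m * C₁ * M := by
        rw [Finset.sum_const, Finset.card_range]; ring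

open Polynomial in
lemma lk_iterate_derivative_comp (p : ℝ[X]) (a L : ℝ) (k : ℕ) :
    derivative^[k] (p.comp (C a + C L * X)) =
      C (L ^ k) * (derivative^[k] p).comp (C a + C L * X) := by
  induction k with
  | zero => simp
  | succ k ih =>
    rw [Function.iterate_succ_apply', ih, derivative_C_mul, derivative_comp,
      Function.iterate_succ_apply']
    simp only [derivative_add, derivative_C, derivative_mul, derivative_X, zero_add, mul_one,
      mul_zero, add_zero]
    rw [pow_succ]
    ring_nf
    rw [C_mul]
    ring

open Polynomial in
lemma lk_taylor_poly_deriv (n : ℕ) (d : ℕ → ℝ) (t : ℝ) (k : ℕ) (hk : k ≤ n) :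
    (derivative^[k] (∑ j ∈ Finset.range (n+1),
      C (d j / j.factorial) * (X - C t) ^ j)).eval t = d k := by
  rw [iterate_derivative_sum]
  simp_rw [iterate_derivative_C_mul, iterate_derivative_X_sub_pow, eval_finset_sum]
  rw [Finset.sum_eq_single k]
  · simp [Nat.descFactorial_self, Nat.sub_self]
    field_simp
  · intro j hj hjk
    rcases lt_or_gt_of_ne hjk with h | h
    · simp [Nat.descFactorial_eq_zero_iff_lt.mpr h]
    · simp [zero_pow (Nat.sub_ne_zero_of_lt h)]
  · intro h
    exact absurd (Finset.mem_range.mpr (by omega)) h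

open Polynomial in
lemma lk_top_deriv (n : ℕ) (d : ℕ → ℝ) (t : ℝ) :
    derivative^[n] (∑ j ∈ Finset.range (n+1),
      C (d j / j.factorial) * (X - C t) ^ j) = C (d n) := by
  rw [iterate_derivative_sum]
  simp_rw [iterate_derivative_C_mul, iterate_derivative_X_sub_pow]
  rw [Finset.sum_eq_single n]
  · rw [Nat.sub_self, pow_zero, Nat.descFactorial_self, nsmul_eq_mul, mul_one, ← C_eq_natCast,
      ← C_mul]
    congr 1
    field_simp
  · intro j hj hjn
    have hlt : j < n := by
      have := Finset.mem_range.mp hj; omega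
    simp [Nat.descFactorial_eq_zero_iff_lt.mpr hlt]
  · intro h
    exact absurd (Finset.mem_range.mpr (by omega)) h

open Polynomial in
lemma lk_remainder (n : ℕ) (a b : ℝ) (hab : a < b) (f : ℝ → ℝ)
    (hf : ContDiffOn ℝ n f (Icc a b)) (K : NNReal)
    (hK : LipschitzOnWith K (iteratedDerivWithin n f (Icc a b)) (Icc a b))
    (t : ℝ) (ht : t ∈ Icc a b) :
    ∀ i, i ≤ n → ∀ s ∈ Icc a b,
      |iteratedDerivWithin (n - i) f (Icc a b) s -
        (derivative^[n - i] (∑ j ∈ Finset.range (n+1),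
          C (iteratedDerivWithin j f (Icc a b) t / j.factorial) * (X - C t) ^ j)).eval s|
        ≤ K * (b - a) ^ (i + 1) := by
  set P : ℝ[X] := ∑ j ∈ Finset.range (n+1),
      C (iteratedDerivWithin j f (Icc a b) t / j.factorial) * (X - C t) ^ j with hP
  have hba : (0:ℝ) ≤ b - a := by linarith
  have hud := uniqueDiffOn_Icc hab
  intro i
  induction i with
  | zero =>
    intro _ s hs
    rw [Nat.sub_zero, lk_top_deriv, eval_C, pow_one]
    have := hK.dist_le_mul s hs t ht
    rw [Real.dist_eq, Real.dist_eq] at this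
    refine this.trans ?_
    exact mul_le_mul_of_nonneg_left (abs_sub_le_iff.mpr ⟨by linarith [hs.1, hs.2, ht.1, ht.2],
      by linarith [hs.1, hs.2, ht.1, ht.2]⟩) K.coe_nonneg
  | succ i ih =>
    intro hi s hs
    have hij : n - (i+1) + 1 = n - i := by omega
    set j := n - (i + 1) with hj
    have hjn : j < n := by omega
    have hjn' : j ≤ n := hjn.le
    have hfd : DifferentiableOn ℝ (iteratedDerivWithin j f (Icc a b)) (Icc a b) :=
      hf.differentiableOn_iteratedDerivWithin (by exact_mod_cast hjn) hud
    have hder : ∀ x ∈ Icc a b, HasDerivWithinAt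
        (fun y => iteratedDerivWithin j f (Icc a b) y - (derivative^[j] P).eval y)
        (iteratedDerivWithin (j+1) f (Icc a b) x - (derivative^[j+1] P).eval x)
        (Icc a b) x := by
      intro x hx
      have h1 : HasDerivWithinAt (iteratedDerivWithin j f (Icc a b))
          (iteratedDerivWithin (j+1) f (Icc a b) x) (Icc a b) x := by
        have := ((hfd x hx).hasDerivWithinAt)
        rwa [← iteratedDerivWithin_succ] at this
      have h2 : HasDerivWithinAt (fun y => (derivative^[j] P).eval y)
          ((derivative^[j+1] P).eval x) (Icc a b) x := by
        rw [Function.iterate_succ_apply']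
        exact ((derivative^[j] P).hasDerivAt x).hasDerivWithinAt (s := Icc a b)
      exact h1.sub h2
    have hbound : ∀ x ∈ Icc a b,
        ‖iteratedDerivWithin (j+1) f (Icc a b) x - (derivative^[j+1] P).eval x‖
          ≤ K * (b - a) ^ (i + 1) := by
      intro x hx
      rw [Real.norm_eq_abs]
      have := ih (by omega) x hx
      rwa [← hij] at this
    have hMVT := Convex.norm_image_sub_le_of_norm_hasDerivWithin_le hder hbound
      (convex_Icc a b) ht hs
    have hgt : iteratedDerivWithin j f (Icc a b) t - (derivative^[j] P).eval t = 0 := by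
      rw [hP, lk_taylor_poly_deriv n _ t j hjn', sub_self]
    rw [Real.norm_eq_abs, Real.norm_eq_abs, hgt, sub_zero] at hMVT
    refine hMVT.trans ?_
    have habs : |s - t| ≤ b - a := abs_sub_le_iff.mpr ⟨by linarith [hs.1, hs.2, ht.1, ht.2],
      by linarith [hs.1, hs.2, ht.1, ht.2]⟩
    have hKnn : (0:ℝ) ≤ (K:ℝ) * (b - a) ^ (i + 1) := by positivity
    calc (K:ℝ) * (b - a) ^ (i + 1) * |s - t| ≤ (K:ℝ) * (b - a) ^ (i + 1) * (b - a) :=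
          mul_le_mul_of_nonneg_left habs hKnn
      _ = (K:ℝ) * (b - a) ^ (i + 1 + 1) := by ring

theorem landau_kolmogorov_type (m : ℕ) (hm : 1 ≤ m) :
    ∃ C : ℝ, 0 < C ∧ ∀ a b : ℝ, a < b → ∀ f : ℝ → ℝ,
      ContDiffOn ℝ (m - 1) f (Icc a b) →
      ∀ K : NNReal,
        LipschitzOnWith K (iteratedDerivWithin (m - 1) f (Icc a b)) (Icc a b) →
      ∀ A : ℝ, (∀ s ∈ Icc a b, |f s| ≤ A) →
      ∀ t ∈ Ioo a b, ∀ k : ℕ, 1 ≤ k → k ≤ m - 1 →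
        |iteratedDerivWithin k f (Icc a b) t| ≤
          C * (b - a) ^ (-(k : ℤ)) * (A + K * (b - a) ^ m) := by
  obtain ⟨n, rfl⟩ : ∃ n, m = n + 1 := ⟨m - 1, by omega⟩
  simp only [Nat.add_sub_cancel]
  obtain ⟨C, hC, hCb⟩ := lk_deriv_eval_bound (n + 1) (by omega)
  refine ⟨C, hC, ?_⟩
  intro a b hab f hf K hK A hA t ht k hk1 hk2
  have hL : (0:ℝ) < b - a := by linarith
  have htIcc : t ∈ Icc a b := Ioo_subset_Icc_self ht
  set d : ℕ → ℝ := fun j => iteratedDerivWithin j f (Icc a b) t with hd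
  set P : Polynomial ℝ := ∑ j ∈ Finset.range (n+1),
      Polynomial.C (d j / j.factorial) * (Polynomial.X - Polynomial.C t) ^ j with hPdef
  set M : ℝ := A + K * (b - a) ^ (n + 1) with hMdef
  -- sup bound for P on [a, b]
  have hM : ∀ s ∈ Icc a b, |P.eval s| ≤ M := by
    intro s hs
    have hr := lk_remainder n a b hab f hf K hK t htIcc n le_rfl s hs
    rw [Nat.sub_self, Function.iterate_zero_apply, iteratedDerivWithin_zero] at hr
    have e1 := abs_le.mp hr
    have e2 := abs_le.mp (hA s hs)
    exact abs_le.mpr ⟨by simp only [hMdef]; linarith, by simp only [hMdef]; linarith⟩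
  -- the rescaled polynomial on [0, 1]
  set u : Polynomial ℝ := Polynomial.C a + Polynomial.C (b - a) * Polynomial.X with hu
  set q : Polynomial ℝ := P.comp u with hq
  have hPdeg : P.natDegree ≤ n := by
    refine Polynomial.natDegree_sum_le_of_forall_le _ _ fun j hj => ?_
    refine (Polynomial.natDegree_C_mul_le _ _).trans ?_
    rw [Polynomial.natDegree_pow, Polynomial.natDegree_X_sub_C, mul_one]
    exact Nat.lt_succ_iff.mp (Finset.mem_range.mp hj)
  have hudeg : u.natDegree ≤ 1 := by
    refine (Polynomial.natDegree_add_le _ _).trans ?_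
    simp only [Polynomial.natDegree_C, max_le_iff]
    exact ⟨by omega, (Polynomial.natDegree_C_mul_le _ _).trans (by simp)⟩
  have hqdeg : q.natDegree < n + 1 := by
    rw [hq]
    have := Polynomial.natDegree_comp_le (p := P) (q := u)
    have h2 := Nat.mul_le_mul hPdeg hudeg
    omega
  have hqM : ∀ x ∈ Icc (0:ℝ) 1, |q.eval x| ≤ M := by
    intro x hx
    rw [hq, Polynomial.eval_comp]
    have hux : u.eval x = a + (b - a) * x := by
      simp [hu]
    rw [hux]
    refine hM _ ⟨?_, ?_⟩
    · nlinarith [hx.1, hx.2]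
    · nlinarith [hx.1, hx.2]
  set τ : ℝ := (t - a) / (b - a) with hτdef
  have hτ : τ ∈ Icc (0:ℝ) 1 := by
    constructor
    · apply div_nonneg _ hL.le
      linarith [ht.1]
    · rw [div_le_one hL]
      linarith [ht.2]
  have heval : (Polynomial.derivative^[k] q).eval τ = (b - a) ^ k * d k := by
    rw [hq, hu, lk_iterate_derivative_comp, Polynomial.eval_mul, Polynomial.eval_C,
      Polynomial.eval_comp]
    have : (Polynomial.C a + Polynomial.C (b - a) * Polynomial.X).eval τ = t := by
      simp only [Polynomial.eval_add, Polynomial.eval_mul, Polynomial.eval_C, Polynomial.eval_X,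
        hτdef]
      field_simp
      ring
    rw [this, hPdef, lk_taylor_poly_deriv n d t k hk2]
  have final := hCb q hqdeg M hqM k τ hτ
  rw [heval, abs_mul, abs_of_pos (by positivity : (0:ℝ) < (b-a)^k)] at final
  have hzpow : (b - a) ^ (-(k : ℤ)) = ((b - a) ^ k)⁻¹ := by
    rw [zpow_neg, zpow_natCast]
  rw [hzpow]
  have hpk : (0:ℝ) < (b - a) ^ k := by positivity
  calc |d k| = ((b - a) ^ k)⁻¹ * ((b - a) ^ k * |d k|) := by field_simp
    _ ≤ ((b - a) ^ k)⁻¹ * (C * M) := by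
        exact mul_le_mul_of_nonneg_left final (by positivity)
    _ = C * ((b - a) ^ k)⁻¹ * M := by ring
end

section
/- Let I ⊆ ℝ be an open interval containing 0, let p ≤ m be natural numbers, and let f : I → ℂ be continuous. Suppose f ∈ C^{m-p}(I), f restricted to I ∖ {0} is C^m, and for all 0 ≤ k ≤ p the limit lim_{t→0} t^k f^{(m-p+k)}(t) exists and is finite. Then t ↦ t^p f(t) is of class C^m on I. -/
open Set Filter Topology

section auxlimits

variable (a b : ℝ) (p m : ℕ) (f : ℝ → ℂ)

lemma aux_isOpen_u : IsOpen (Ioo a b \ {0}) :=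
  isOpen_Ioo.inter isOpen_compl_singleton

lemma aux_idw_open {s : Set ℝ} {f : ℝ → ℂ} {n : ℕ} (hs : IsOpen s) {x : ℝ} (hx : x ∈ s) :
    iteratedDerivWithin n f s x = iteratedDeriv n f x := by
  rw [iteratedDerivWithin_eq_iteratedFDerivWithin, iteratedDeriv_eq_iteratedFDeriv,
    iteratedFDerivWithin_of_isOpen n hs hx]

lemma aux_cast_sub (m p : ℕ) :
    ((m - p : ℕ) : WithTop ℕ∞) = (m : WithTop ℕ∞) - (p : WithTop ℕ∞) := by
  rw [show ((m - p : ℕ) : WithTop ℕ∞) = (((m - p : ℕ) : ℕ∞) : WithTop ℕ∞) from rfl]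
  rw [show ((m : ℕ) : WithTop ℕ∞) = (((m : ℕ) : ℕ∞) : WithTop ℕ∞) from rfl]
  rw [show ((p : ℕ) : WithTop ℕ∞) = (((p : ℕ) : ℕ∞) : WithTop ℕ∞) from rfl]
  rw [← WithTop.coe_sub]
  norm_cast

lemma aux_base (h0 : (0:ℝ) ∈ Ioo a b) (hpm : p ≤ m)
    (h1 : ContDiffOn ℝ (m - p) f (Ioo a b))
    (h3 : ∀ k : ℕ, k ≤ p → ∃ L : ℂ,
      Filter.Tendsto
        (fun t : ℝ => (t : ℂ) ^ k *
          iteratedDerivWithin (m - p + k) f (Ioo a b \ {0}) t)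
        (nhdsWithin 0 (Ioo a b \ {0})) (nhds L)) :
    ∀ n j : ℕ, n ≤ m → n + p ≤ m + j →
    ∃ L : ℂ, Tendsto (fun t : ℝ => (t:ℂ)^j * iteratedDerivWithin n f (Ioo a b \ {0}) t)
      (nhdsWithin 0 (Ioo a b \ {0})) (nhds L) := by
  set u := Ioo a b \ {0} with hu
  have hUo : IsOpen u := aux_isOpen_u a b
  intro n j hn hcond
  rw [← aux_cast_sub m p] at h1
  have hpowt : ∀ r : ℕ, Tendsto (fun t : ℝ => (t:ℂ)^r) (nhdsWithin 0 u) (nhds ((0:ℂ)^r)) := by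
    intro r
    have : Continuous (fun t : ℝ => (t:ℂ)^r) := (Complex.continuous_ofReal.pow r)
    simpa using (this.tendsto 0).mono_left nhdsWithin_le_nhds
  by_cases hcase : n ≤ m - p
  · have hcontn : ContinuousOn (iteratedDerivWithin n f (Ioo a b)) (Ioo a b) :=
      h1.continuousOn_iteratedDerivWithin (by exact_mod_cast hcase) isOpen_Ioo.uniqueDiffOn
    have htend : Tendsto (iteratedDerivWithin n f (Ioo a b)) (nhdsWithin 0 (Ioo a b))
        (nhds (iteratedDerivWithin n f (Ioo a b) 0)) := hcontn 0 h0
    have htend' : Tendsto (fun t => iteratedDerivWithin n f u t) (nhdsWithin 0 u)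
        (nhds (iteratedDerivWithin n f (Ioo a b) 0)) := by
      refine ((htend.mono_left (nhdsWithin_mono 0 diff_subset))).congr' ?_
      filter_upwards [self_mem_nhdsWithin] with t ht
      rw [aux_idw_open isOpen_Ioo ht.1, ← aux_idw_open hUo ht]
    exact ⟨_, (hpowt j).mul htend'⟩
  · set k := n - (m - p) with hk
    have hkp : k ≤ p := by omega
    have hjk : k ≤ j := by omega
    obtain ⟨L, hL⟩ := h3 k hkp
    have hmpk : m - p + k = n := by omega
    rw [hmpk] at hL
    refine ⟨(0:ℂ)^(j-k) * L, ?_⟩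
    have := (hpowt (j-k)).mul hL
    refine this.congr fun t => ?_
    rw [← mul_assoc, ← pow_add]
    congr 2
    omega

lemma aux_hasDerivAt_ofReal (t : ℝ) : HasDerivAt (fun x : ℝ => (x:ℂ)) 1 t := by
  simpa using (hasDerivAt_id t).ofReal_comp

lemma aux_mul_t {u : Set ℝ} (hUo : IsOpen u) : ∀ (n : ℕ) (h : ℝ → ℂ),
    ContDiffOn ℝ (n+1) h u → ∀ t ∈ u,
    iteratedDerivWithin (n+1) (fun x : ℝ => (x:ℂ) * h x) u t
      = (t:ℂ) * iteratedDerivWithin (n+1) h u t + ((n:ℂ)+1) * iteratedDerivWithin n h u t := by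
  intro n
  induction n with
  | zero =>
    intro h hh t ht
    have udw : UniqueDiffWithinAt ℝ u t := hUo.uniqueDiffWithinAt ht
    have hdh : HasDerivWithinAt h (derivWithin h u t) u t :=
      ((hh.differentiableOn (by simp)) t ht).hasDerivWithinAt
    have hd : HasDerivWithinAt (fun x : ℝ => (x:ℂ) * h x)
        (1 * h t + (t:ℂ) * derivWithin h u t) u t :=
      ((aux_hasDerivAt_ofReal t).hasDerivWithinAt).mul hdh
    rw [iteratedDerivWithin_one, hd.derivWithin udw,
      iteratedDerivWithin_one, iteratedDerivWithin_zero]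
    ring
  | succ n IH =>
    intro h hh t ht
    have udw : UniqueDiffWithinAt ℝ u t := hUo.uniqueDiffWithinAt ht
    have hudo : UniqueDiffOn ℝ u := hUo.uniqueDiffOn
    have hh' : ContDiffOn ℝ (n+1) h u := hh.of_le (by exact_mod_cast Nat.le_succ (n+1))
    have hdiff1 : DifferentiableWithinAt ℝ (iteratedDerivWithin (n+1) h u) u t :=
      hh.differentiableOn_iteratedDerivWithin (by exact_mod_cast Nat.lt_succ_self (n+1)) hudo t ht
    have hdiff0 : DifferentiableWithinAt ℝ (iteratedDerivWithin n h u) u t :=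
      hh.differentiableOn_iteratedDerivWithin
        (by exact_mod_cast Nat.lt_succ_of_lt (Nat.lt_succ_self n)) hudo t ht
    have hd1 : HasDerivWithinAt (fun x : ℝ => (x:ℂ) * iteratedDerivWithin (n+1) h u x)
        (1 * iteratedDerivWithin (n+1) h u t
          + (t:ℂ) * iteratedDerivWithin (n+2) h u t) u t := by
      have := ((aux_hasDerivAt_ofReal t).hasDerivWithinAt).mul hdiff1.hasDerivWithinAt
      rwa [← iteratedDerivWithin_succ] at this
    have hd2 : HasDerivWithinAt (fun x : ℝ => ((n:ℂ)+1) * iteratedDerivWithin n h u x)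
        (((n:ℂ)+1) * iteratedDerivWithin (n+1) h u t) u t := by
      have := hdiff0.hasDerivWithinAt.const_mul ((n:ℂ)+1)
      rwa [← iteratedDerivWithin_succ] at this
    rw [iteratedDerivWithin_succ]
    rw [derivWithin_congr (fun x hx => IH h hh' x hx) (IH h hh' t ht)]
    rw [(show HasDerivWithinAt
      (fun x : ℝ => (x:ℂ) * iteratedDerivWithin (n+1) h u x
        + ((n:ℂ)+1) * iteratedDerivWithin n h u x) _ u t from hd1.add hd2).derivWithin udw]
    push_cast
    ring

lemma aux_R (h0 : (0:ℝ) ∈ Ioo a b) (hpm : p ≤ m)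
    (h1 : ContDiffOn ℝ (m - p) f (Ioo a b))
    (h2 : ContDiffOn ℝ m f (Ioo a b \ {0}))
    (h3 : ∀ k : ℕ, k ≤ p → ∃ L : ℂ,
      Filter.Tendsto
        (fun t : ℝ => (t : ℂ) ^ k *
          iteratedDerivWithin (m - p + k) f (Ioo a b \ {0}) t)
        (nhdsWithin 0 (Ioo a b \ {0})) (nhds L)) :
    ∀ q n j : ℕ, n ≤ m → n + p ≤ m + j + q →
    ∃ L : ℂ, Tendsto (fun t : ℝ => (t:ℂ)^j *
        iteratedDerivWithin n (fun x : ℝ => (x:ℂ)^q * f x) (Ioo a b \ {0}) t)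
      (nhdsWithin 0 (Ioo a b \ {0})) (nhds L) := by
  set u := Ioo a b \ {0} with hu
  have hUo : IsOpen u := aux_isOpen_u a b
  intro q
  induction q with
  | zero =>
    intro n j hn hcond
    simp only [pow_zero, one_mul]
    exact aux_base a b p m f h0 hpm h1 h3 n j hn (by omega)
  | succ q IH =>
    intro n j hn hcond
    match n with
    | 0 =>
      simp only [iteratedDerivWithin_zero]
      obtain ⟨L, hL⟩ := aux_base a b p m f h0 hpm h1 h3 0 (j+q+1) (Nat.zero_le m) (by omega)
      simp only [iteratedDerivWithin_zero] at hL
      refine ⟨L, hL.congr fun t => ?_⟩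
      ring
    | (n'+1) =>
      have heq : (fun x : ℝ => (x:ℂ)^(q+1) * f x)
          = fun x : ℝ => (x:ℂ) * ((x:ℂ)^q * f x) := funext fun x => by ring
      rw [heq]
      have hq : ContDiffOn ℝ (n'+1) (fun x : ℝ => (x:ℂ)^q * f x) u := by
        refine ContDiffOn.mul ?_ (h2.of_le (by exact_mod_cast hn))
        exact ((Complex.ofRealCLM.contDiff.pow q).of_le le_top).contDiffOn
      obtain ⟨L₁, hL₁⟩ := IH (n'+1) (j+1) hn (by omega)
      obtain ⟨L₂, hL₂⟩ := IH n' j (by omega) (by omega)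
      refine ⟨L₁ + ((n':ℂ)+1) * L₂, ?_⟩
      refine Filter.Tendsto.congr' ?_ (hL₁.add (hL₂.const_mul ((n':ℂ)+1)))
      filter_upwards [self_mem_nhdsWithin] with t ht
      rw [aux_mul_t hUo n' _ hq t ht]
      ring


lemma aux_ext1 (a b : ℝ) (h0 : (0:ℝ) ∈ Ioo a b) (g : ℝ → ℂ) (L : ℂ)
    (hcont : ContinuousOn g (Ioo a b))
    (hdiff : DifferentiableOn ℝ g (Ioo a b \ {0}))
    (hlim : Tendsto (fun t => derivWithin g (Ioo a b \ {0}) t)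
      (nhdsWithin 0 (Ioo a b \ {0})) (nhds L)) :
    HasDerivAt g L 0 := by
  set u := Ioo a b \ {0} with hu
  have hUo : IsOpen u := aux_isOpen_u a b
  have ha : a < 0 := h0.1
  have hb : 0 < b := h0.2
  have hgc : ContinuousAt g 0 := hcont.continuousAt (isOpen_Ioo.mem_nhds h0)
  have hderiv_eq : ∀ t ∈ u, derivWithin g u t = deriv g t :=
    fun t ht => derivWithin_of_isOpen hUo ht
  have hIoo_r : Ioo (0:ℝ) b ⊆ u := fun t ht => ⟨⟨ha.trans ht.1, ht.2⟩, ne_of_gt ht.1⟩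
  have hmem_r : u ∈ nhdsWithin (0:ℝ) (Ioi 0) :=
    mem_of_superset (Ioo_mem_nhdsGT_of_mem ⟨le_refl _, hb⟩) hIoo_r
  have hR : HasDerivWithinAt g L (Ici 0) 0 :=
    hasDerivWithinAt_Ici_of_tendsto_deriv (hdiff.mono hIoo_r)
      hgc.continuousWithinAt (Ioo_mem_nhdsGT_of_mem ⟨le_refl _, hb⟩)
      (by
        refine (hlim.mono_left (nhdsWithin_le_of_mem hmem_r)).congr' ?_
        filter_upwards [hmem_r] with t ht
        rw [hderiv_eq t ht])
  have hIoo_l : Ioo a (0:ℝ) ⊆ u := fun t ht => ⟨⟨ht.1, ht.2.trans hb⟩, ne_of_lt ht.2⟩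
  have hmem_l : u ∈ nhdsWithin (0:ℝ) (Iio 0) :=
    mem_of_superset (Ioo_mem_nhdsLT_of_mem ⟨ha, le_refl _⟩) hIoo_l
  have hL : HasDerivWithinAt g L (Iic 0) 0 :=
    hasDerivWithinAt_Iic_of_tendsto_deriv (hdiff.mono hIoo_l)
      hgc.continuousWithinAt (Ioo_mem_nhdsLT_of_mem ⟨ha, le_refl _⟩)
      (by
        refine (hlim.mono_left (nhdsWithin_le_of_mem hmem_l)).congr' ?_
        filter_upwards [hmem_l] with t ht
        rw [hderiv_eq t ht])
  have := hL.union hR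
  rw [Iic_union_Ici] at this
  rwa [hasDerivWithinAt_univ] at this

lemma aux_step (a b : ℝ) (h0 : (0:ℝ) ∈ Ioo a b) : ∀ (n : ℕ) (g : ℝ → ℂ),
    ContinuousOn g (Ioo a b) → ContDiffOn ℝ n g (Ioo a b) →
    ContDiffOn ℝ (n+1) g (Ioo a b \ {0}) →
    (∃ L, Tendsto (iteratedDerivWithin (n+1) g (Ioo a b \ {0}))
      (nhdsWithin 0 (Ioo a b \ {0})) (nhds L)) →
    ContDiffOn ℝ (n+1) g (Ioo a b) := by
  have hUo : IsOpen (Ioo a b \ {0}) := aux_isOpen_u a b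
  have hmem_ne : Ioo a b \ {0} ∈ nhdsWithin (0:ℝ) ({0}ᶜ) := by
    rw [diff_eq]
    exact inter_mem (mem_nhdsWithin_of_mem_nhds (isOpen_Ioo.mem_nhds h0)) self_mem_nhdsWithin
  intro n
  induction n with
  | zero =>
    intro g hc hg0 hg1 ⟨L, hlim⟩
    set u := Ioo a b \ {0} with hu
    have hderiv_eq : ∀ t ∈ u, derivWithin g u t = deriv g t :=
      fun t ht => derivWithin_of_isOpen hUo ht
    have hlim' : Tendsto (fun t => derivWithin g u t) (nhdsWithin 0 u) (nhds L) := by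
      refine hlim.congr' ?_
      filter_upwards [self_mem_nhdsWithin] with t ht
      rw [iteratedDerivWithin_one]
    have hdiffu : DifferentiableOn ℝ g u := hg1.differentiableOn (by norm_num)
    have hD : HasDerivAt g L 0 := aux_ext1 a b h0 g L hc hdiffu hlim'
    have hdiffs : DifferentiableOn ℝ g (Ioo a b) := by
      intro t ht
      by_cases h : t = 0
      · subst h; exact hD.differentiableAt.differentiableWithinAt
      · exact ((hdiffu t ⟨ht, h⟩).differentiableAt (hUo.mem_nhds ⟨ht, h⟩)).differentiableWithinAt
    have hdcont : ContinuousOn (deriv g) (Ioo a b) := by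
      intro t ht
      by_cases h : t = 0
      · subst h
        apply ContinuousAt.continuousWithinAt
        rw [ContinuousAt, hD.deriv]
        rw [← nhdsNE_sup_pure (0:ℝ)]
        refine Tendsto.sup ?_ ?_
        · refine ((hlim'.mono_left (nhdsWithin_le_of_mem hmem_ne)).congr' ?_)
          filter_upwards [hmem_ne] with t ht
          rw [hderiv_eq t ht]
        · rw [← hD.deriv]
          exact tendsto_pure_nhds _ _
      · have : ContinuousOn (deriv g) u :=
          hg1.continuousOn_deriv_of_isOpen hUo (by norm_num)
        exact ((this t ⟨ht, h⟩).continuousAt (hUo.mem_nhds ⟨ht, h⟩)).continuousWithinAt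
    rw [contDiffOn_succ_iff_deriv_of_isOpen isOpen_Ioo]
    refine ⟨hdiffs, by simp, ?_⟩
    exact_mod_cast contDiffOn_zero.mpr hdcont
  | succ n IH =>
    intro g hc hgs hgu ⟨L, hlim⟩
    set u := Ioo a b \ {0} with hu
    rw [contDiffOn_succ_iff_deriv_of_isOpen isOpen_Ioo]
    rw [contDiffOn_succ_iff_deriv_of_isOpen hUo] at hgu
    have hdiffs : DifferentiableOn ℝ g (Ioo a b) :=
      hgs.differentiableOn (by simp)
    have hDs : ContDiffOn ℝ n (deriv g) (Ioo a b) :=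
      ((contDiffOn_succ_iff_deriv_of_isOpen isOpen_Ioo).mp hgs).2.2
    have hDu : ContDiffOn ℝ (n+1) (deriv g) u := hgu.2.2
    have hlimD : ∃ L, Tendsto (iteratedDerivWithin (n+1) (deriv g) u)
        (nhdsWithin 0 u) (nhds L) := by
      refine ⟨L, hlim.congr' ?_⟩
      filter_upwards [self_mem_nhdsWithin] with t ht
      rw [aux_idw_open hUo ht, aux_idw_open hUo ht, ← iteratedDeriv_succ']
    exact ⟨hdiffs, by simp, IH (deriv g) hDs.continuousOn hDs hDu hlimD⟩


theorem pCm_of_characterization (a b : ℝ) (h0 : (0 : ℝ) ∈ Ioo a b)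
    (p m : ℕ) (hpm : p ≤ m) (f : ℝ → ℂ)
    (hcont : ContinuousOn f (Ioo a b))
    (h1 : ContDiffOn ℝ (m - p) f (Ioo a b))
    (h2 : ContDiffOn ℝ m f (Ioo a b \ {0}))
    (h3 : ∀ k : ℕ, k ≤ p → ∃ L : ℂ,
      Filter.Tendsto
        (fun t : ℝ => (t : ℂ) ^ k *
          iteratedDerivWithin (m - p + k) f (Ioo a b \ {0}) t)
        (nhdsWithin 0 (Ioo a b \ {0})) (nhds L)) :
    ContDiffOn ℝ m (fun t : ℝ => (t : ℂ) ^ p * f t) (Ioo a b) := by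
  have hUo : IsOpen (Ioo a b \ {0}) := aux_isOpen_u a b
  have h1' : ContDiffOn ℝ ((m - p : ℕ)) f (Ioo a b) := by
    rw [← aux_cast_sub m p] at h1; exact h1
  have hgcont : ContinuousOn (fun t : ℝ => (t:ℂ)^p * f t) (Ioo a b) :=
    ((Complex.continuous_ofReal.pow p).continuousOn).mul hcont
  have hgu : ContDiffOn ℝ m (fun t : ℝ => (t:ℂ)^p * f t) (Ioo a b \ {0}) :=
    (((Complex.ofRealCLM.contDiff.pow p).of_le le_top).contDiffOn).mul h2
  have key : ∀ i : ℕ, i ≤ p →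
      ContDiffOn ℝ ((m - p + i : ℕ)) (fun t : ℝ => (t:ℂ)^p * f t) (Ioo a b) := by
    intro i
    induction i with
    | zero =>
      intro _
      have := (((Complex.ofRealCLM.contDiff.pow p).of_le le_top).contDiffOn).mul h1'
      simpa using this
    | succ i IH =>
      intro hip
      have hi := IH (Nat.le_of_succ_le hip)
      have hcdu : ContDiffOn ℝ ((m - p + i : ℕ) + 1) (fun t : ℝ => (t:ℂ)^p * f t)
          (Ioo a b \ {0}) := by
        refine hgu.of_le ?_
        exact_mod_cast (by omega : m - p + i + 1 ≤ m)
      have hlim : ∃ L : ℂ, Filter.Tendsto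
          (iteratedDerivWithin ((m - p + i) + 1) (fun t : ℝ => (t:ℂ)^p * f t) (Ioo a b \ {0}))
          (nhdsWithin 0 (Ioo a b \ {0})) (nhds L) := by
        obtain ⟨L, hL⟩ := aux_R a b p m f h0 hpm h1 h2 h3 p (m - p + i + 1) 0
          (by omega) (by omega)
        refine ⟨L, hL.congr fun t => ?_⟩
        rw [pow_zero, one_mul]
      have hstep := aux_step a b h0 (m - p + i) (fun t : ℝ => (t:ℂ)^p * f t)
        hgcont hi hcdu hlim
      exact_mod_cast hstep
  have hfin := key p le_rfl
  rw [Nat.sub_add_cancel hpm] at hfin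
  exact hfin

end auxlimits
end
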